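/- Suppose x ∈ ℝⁿ, α > 0 and β > 0 satisfy the switching condition ‖c(x)‖ ≤ β·α·‖g_T(x)‖, and let x⁺ = x − α·g_T(x) be the corresponding tangential step. Then ψ(x⁺) − ψ(x) ≤ −α‖g_T(x)‖² + ( (1/2)(L_L + ρL_c) + βL_λ + L_λL_c ) · α² ‖g_T(x)‖². -/

import Mathlib

open RealInnerProductSpace

lemma descent_lemma {F : Type*} [NormedAddCommGroup F] [InnerProductSpace ℝ F] [CompleteSpace F]
    (L : F → ℝ) (G : F → F) (K : ℝ)
    (hG : ∀ y, HasGradientAt L (G y) y)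
    (hK : ∀ y z, ‖G y - G z‖ ≤ K * ‖y - z‖)
    (x d : F) :
    L (x + d) ≤ L x + ⟪G x, d⟫ + K / 2 * ‖d‖ ^ 2 := by
  have hφ : ∀ t : ℝ, HasDerivAt (fun t : ℝ => L (x + t • d)) ⟪G (x + t • d), d⟫ t := by
    intro t
    have hcurve : HasDerivAt (fun t : ℝ => x + t • d) d t := by
      simpa using ((hasDerivAt_id t).smul_const d).const_add x
    have := (hG (x + t • d)).hasFDerivAt.comp_hasDerivAt t hcurve
    simp [InnerProductSpace.toDual_apply_apply] at this
    exact this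
  set h : ℝ → ℝ := fun t => L x + t * ⟪G x, d⟫ + K * ‖d‖ ^ 2 * t ^ 2 / 2 - L (x + t • d) with hh
  have hderiv : ∀ t : ℝ, HasDerivAt h (⟪G x, d⟫ + K * ‖d‖ ^ 2 * t - ⟪G (x + t • d), d⟫) t := by
    intro t
    have h1 : HasDerivAt (fun t : ℝ => L x + t * ⟪G x, d⟫ + K * ‖d‖ ^ 2 * t ^ 2 / 2)
        (⟪G x, d⟫ + K * ‖d‖ ^ 2 * t) t := by
      have : HasDerivAt (fun t : ℝ => K * ‖d‖ ^ 2 * t ^ 2 / 2) (K * ‖d‖ ^ 2 * t) t := by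
        have := ((hasDerivAt_pow 2 t).const_mul (K * ‖d‖ ^ 2)).div_const 2
        exact this.congr_deriv (by ring)
      exact ((((hasDerivAt_id t).mul_const ⟪G x, d⟫).const_add (L x)).add this).congr_deriv (by ring)
    exact h1.sub (hφ t)
  have hmono : MonotoneOn h (Set.Icc (0:ℝ) 1) := by
    apply monotoneOn_of_deriv_nonneg (convex_Icc 0 1)
    · exact fun t _ => (hderiv t).continuousAt.continuousWithinAt
    · exact fun t _ => ((hderiv t).differentiableAt).differentiableWithinAt
    · intro t ht
      rw [(hderiv t).deriv]
      rw [interior_Icc] at ht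
      have hb : ⟪G (x + t • d), d⟫ - ⟪G x, d⟫ ≤ K * ‖d‖ ^ 2 * t := by
        have h1 : ⟪G (x + t • d) - G x, d⟫ ≤ ‖G (x + t • d) - G x‖ * ‖d‖ :=
          real_inner_le_norm _ _
        have h2 : ‖G (x + t • d) - G x‖ ≤ K * ‖x + t • d - x‖ := hK _ _
        have h3 : ‖x + t • d - x‖ = t * ‖d‖ := by
          rw [add_sub_cancel_left, norm_smul, Real.norm_eq_abs, abs_of_pos ht.1]
        rw [← inner_sub_left]
        calc ⟪G (x + t • d) - G x, d⟫ ≤ ‖G (x + t • d) - G x‖ * ‖d‖ := h1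
          _ ≤ K * (t * ‖d‖) * ‖d‖ := by
              apply mul_le_mul_of_nonneg_right _ (norm_nonneg d)
              rw [← h3]; exact h2
          _ = K * ‖d‖ ^ 2 * t := by ring
      linarith
  have h01 : h 0 ≤ h 1 := hmono (Set.mem_Icc.2 ⟨le_refl 0, zero_le_one⟩)
    (Set.mem_Icc.2 ⟨zero_le_one, le_refl 1⟩) zero_le_one
  simp only [hh, zero_smul, add_zero, one_smul, zero_mul, zero_pow, mul_zero] at h01
  nlinarith [h01]

set_option maxHeartbeats 1000000 in

/-- Lyapunov decrease along a tangential (projected-gradient) step of the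
ADSWITCH algorithm: under the switching condition `‖c(x)‖ ≤ βα‖g_T(x)‖`, the
step `x⁺ = x − α g_T(x)` satisfies
`ψ(x⁺) − ψ(x) ≤ −α‖g_T(x)‖² + ((1/2)(L_L + ρL_c) + βL_λ + L_λL_c)α²‖g_T(x)‖²`,
where `ψ(x) = f(x) + λ̂(x)ᵀc(x) + ρ‖c(x)‖`, `g_T(x) = g(x) + J(x)ᵀλ̂(x)` and
`λ̂(x)` is the least-squares multiplier, `(J(x)J(x)ᵀ)λ̂(x) = −J(x)g(x)`. -/
theorem tangential_step_lyapunov_decrease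
    (n m : ℕ) (hmn : m ≤ n)
    (f : EuclideanSpace ℝ (Fin n) → ℝ)
    (c : EuclideanSpace ℝ (Fin n) → EuclideanSpace ℝ (Fin m))
    (J : EuclideanSpace ℝ (Fin n) → (EuclideanSpace ℝ (Fin n) →L[ℝ] EuclideanSpace ℝ (Fin m)))
    (g gT : EuclideanSpace ℝ (Fin n) → EuclideanSpace ℝ (Fin n))
    (lam : EuclideanSpace ℝ (Fin n) → EuclideanSpace ℝ (Fin m))
    (ψ : EuclideanSpace ℝ (Fin n) → ℝ)
    (ρ Lc Llam LL : ℝ)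
    -- differentiability: `g` is the gradient of `f` and `J` the Jacobian of `c`
    (hf : ∀ y, HasGradientAt f (g y) y)
    (hcdiff : ∀ y, HasFDerivAt c (J y) y)
    -- `J` has full row rank everywhere
    (hrank : ∀ y, Function.Surjective (J y))
    -- least-squares multiplier and projected gradient
    (hlam : ∀ y, (J y) ((ContinuousLinearMap.adjoint (J y)) (lam y)) = -((J y) (g y)))
    (hgT : ∀ y, gT y = g y + (ContinuousLinearMap.adjoint (J y)) (lam y))
    -- Lyapunov function with fixed penalty parameter ρ ≥ 0
    (hρ : 0 ≤ ρ)
    (hψ : ∀ y, ψ y = f y + (inner ℝ (lam y) (c y) : ℝ) + ρ * ‖c y‖)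
    -- Lipschitz hypotheses
    (hclip : ∀ y z, ‖c y - c z‖ ≤ Lc * ‖y - z‖)
    (hctay : ∀ y z, ‖c z - c y - (J y) (z - y)‖ ≤ (Lc / 2) * ‖z - y‖ ^ 2)
    (hlamlip : ∀ y z, ‖lam y - lam z‖ ≤ Llam * ‖y - z‖)
    (hLlip : ∀ (μ : EuclideanSpace ℝ (Fin m)) (y z : EuclideanSpace ℝ (Fin n)),
      ‖(g y + (ContinuousLinearMap.adjoint (J y)) μ) -
          (g z + (ContinuousLinearMap.adjoint (J z)) μ)‖ ≤ LL * ‖y - z‖)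
    -- the tangential step and the switching condition
    (x : EuclideanSpace ℝ (Fin n)) (α β : ℝ) (hα : 0 < α) (hβ : 0 < β)
    (hswitch : ‖c x‖ ≤ β * α * ‖gT x‖) :
    ψ (x - α • gT x) - ψ x ≤
      -α * ‖gT x‖ ^ 2 +
        ((1 / 2) * (LL + ρ * Lc) + β * Llam + Llam * Lc) * α ^ 2 * ‖gT x‖ ^ 2 := by
  set xp := x - α • gT x with hxp
  set s := ‖gT x‖ with hs
  have hs0 : 0 ≤ s := norm_nonneg _
  set d : EuclideanSpace ℝ (Fin n) := -α • gT x with hd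
  have hxpd : xp = x + d := by rw [hxp, hd, neg_smul, sub_eq_add_neg]
  have hnd : ‖d‖ = α * s := by
    rw [hd, norm_smul, Real.norm_eq_abs, abs_neg, abs_of_pos hα]
  have hdiff : xp - x = d := by rw [hxpd, add_sub_cancel_left]
  -- the Lagrangian with frozen multiplier
  set L : EuclideanSpace ℝ (Fin n) → ℝ := fun y => f y + ⟪lam x, c y⟫ with hL
  set G : EuclideanSpace ℝ (Fin n) → EuclideanSpace ℝ (Fin n) :=
    fun y => g y + (ContinuousLinearMap.adjoint (J y)) (lam x) with hG
  have hGgrad : ∀ y, HasGradientAt L (G y) y := by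
    intro y
    have h2 : HasGradientAt (fun y => (⟪lam x, c y⟫ : ℝ))
        ((ContinuousLinearMap.adjoint (J y)) (lam x)) y := by
      rw [hasGradientAt_iff_hasFDerivAt]
      have := (innerSL ℝ (lam x)).hasFDerivAt.comp y (hcdiff y)
      refine this.congr_fderiv ?_
      ext v
      simp [InnerProductSpace.toDual_apply_apply, ContinuousLinearMap.adjoint_inner_left]
    have := ((hf y).hasFDerivAt).add h2.hasFDerivAt
    rw [hasGradientAt_iff_hasFDerivAt]
    refine this.congr_fderiv ?_
    rw [map_add]
  have hGK : ∀ y z, ‖G y - G z‖ ≤ LL * ‖y - z‖ := fun y z => hLlip (lam x) y z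
  have hGx : G x = gT x := (hgT x).symm
  have hinner : ⟪G x, d⟫ = -α * s ^ 2 := by
    rw [hGx, hd, real_inner_smul_right, real_inner_self_eq_norm_sq]
  have hA : L xp - L x ≤ -α * s ^ 2 + LL / 2 * (α * s) ^ 2 := by
    have := descent_lemma L G LL hGgrad hGK x d
    rw [← hxpd] at this
    rw [hinner, hnd] at this
    linarith
  -- Jacobian kills gT
  have hJgT : (J x) (gT x) = 0 := by
    rw [hgT x, map_add, hlam x]; abel
  have hJd : (J x) (xp - x) = 0 := by
    rw [hdiff, hd, map_smul, hJgT, smul_zero]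
  have hC : ‖c xp‖ - ‖c x‖ ≤ Lc / 2 * (α * s) ^ 2 := by
    have h1 := hctay x xp
    rw [hJd, sub_zero] at h1
    have h2 : ‖c xp‖ - ‖c x‖ ≤ ‖c xp - c x‖ := norm_sub_norm_le _ _
    rw [hdiff, hnd] at h1
    linarith
  -- multiplier drift term
  have hB : ⟪lam xp - lam x, c xp⟫ ≤ (β * Llam + Llam * Lc) * α ^ 2 * s ^ 2 := by
    have h1 : ⟪lam xp - lam x, c xp⟫ ≤ ‖lam xp - lam x‖ * ‖c xp‖ := real_inner_le_norm _ _
    have h2 : ‖lam xp - lam x‖ ≤ Llam * (α * s) := by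
      have := hlamlip xp x
      rwa [hdiff, hnd] at this
    have h3 : ‖c xp‖ ≤ β * α * s + Lc * (α * s) := by
      have h4 := hclip xp x
      rw [hdiff, hnd] at h4
      have h5 : ‖c xp‖ - ‖c x‖ ≤ ‖c xp - c x‖ := norm_sub_norm_le _ _
      linarith
    have h6 : 0 ≤ Llam * (α * s) := le_trans (norm_nonneg _) h2
    have h7 : 0 ≤ ‖c xp‖ := norm_nonneg _
    calc ⟪lam xp - lam x, c xp⟫ ≤ ‖lam xp - lam x‖ * ‖c xp‖ := h1
      _ ≤ (Llam * (α * s)) * (β * α * s + Lc * (α * s)) :=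
          mul_le_mul h2 h3 h7 h6
      _ = (β * Llam + Llam * Lc) * α ^ 2 * s ^ 2 := by ring
  -- decomposition of ψ
  have hdecomp : ψ xp - ψ x =
      (L xp - L x) + ⟪lam xp - lam x, c xp⟫ + ρ * (‖c xp‖ - ‖c x‖) := by
    rw [hψ xp, hψ x, hL]
    simp only [inner_sub_left]
    ring
  have hρC : ρ * (‖c xp‖ - ‖c x‖) ≤ ρ * (Lc / 2 * (α * s) ^ 2) :=
    mul_le_mul_of_nonneg_left hC hρ
  rw [hdecomp]
  nlinarith [hA, hB, hρC]
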